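/- Per-cell energy identity with numerical entropy flux (the key identity (19)–(22) in the proof of Theorem 2.3): Let Δt > 0, α < β, let u⁰, u¹, ψ : [α,β] → ℂ be continuously differentiable, write u = (u⁰ + u¹)/2, let Q, W : [α,β] → ℝ be continuous, and let P ∈ ℂ (the exterior right-sided trace of ψ at β) and U ∈ ℂ (the exterior left-sided trace of u at α) be given. Assume the two cell variational equations hold: (E1) i∫_α^β (u¹ − u⁰)·conj(u) dx − Δt·[P·conj(u(β)) − ψ(α)·conj(u(α))] + Δt·∫_α^β (ψ·(conj u)' − Q·u·conj(u)) dx − ∫_α^β u·conj(u)·W dx = 0, and (E2) ∫_α^β ψ·conj(ψ) dx + ∫_α^β u·(conj ψ)' dx − [u(β)·conj(ψ(β)) − U·conj(ψ(α))] = 0. Then ∫_α^β (|u¹(x)|² − |u⁰(x)|²) dx = 2Δt·[Im(P·conj(u(β))) − Im(ψ(α)·conj(U))]; equivalently, ∫_α^β (|u¹|² − |u⁰|²) dx + Φ̂(β) − Φ̂(α) = 0 with numerical entropy flux Φ̂(β) = −2Δt·Im(P·conj(u(β))) and Φ̂(α) = −2Δt·Im(ψ(α)·conj(U)). -/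

import Mathlib

open MeasureTheory Complex ComplexConjugate

/-- Per-cell energy identity with numerical entropy flux (identity (19)–(22) in the proof of
Theorem 2.3) for the symplectic local discontinuous Galerkin method on a single cell `[α,β]`:
if the two cell variational equations (E1), (E2) hold, with exterior trace `P` of `ψ` at `β`
and exterior trace `U` of `u` at `α`, then
`∫_α^β (|u¹|² − |u⁰|²) = 2Δt (Im(P conj(u β)) − Im(ψ(α) conj U))`. -/
theorem ldg_cell_energy_identity
    (Δt α β : ℝ) (hΔt : 0 < Δt) (hαβ : α < β)
    (u0 u1 ψ : ℝ → ℂ)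
    (hu0 : ContDiffOn ℝ 1 u0 (Set.Icc α β))
    (hu1 : ContDiffOn ℝ 1 u1 (Set.Icc α β))
    (hψ : ContDiffOn ℝ 1 ψ (Set.Icc α β))
    (Q W : ℝ → ℝ)
    (hQ : ContinuousOn Q (Set.Icc α β)) (hW : ContinuousOn W (Set.Icc α β))
    (P U : ℂ)
    (u : ℝ → ℂ) (hu : u = fun x => (u0 x + u1 x) / 2)
    (hE1 : Complex.I * (∫ x in α..β, (u1 x - u0 x) * conj (u x))
        - (Δt : ℂ) * (P * conj (u β) - ψ α * conj (u α))
        + (Δt : ℂ) * (∫ x in α..β,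
            (ψ x * derivWithin (fun y => conj (u y)) (Set.Icc α β) x
              - (Q x : ℂ) * (u x * conj (u x))))
        - (∫ x in α..β, u x * conj (u x) * (W x : ℂ)) = 0)
    (hE2 : (∫ x in α..β, ψ x * conj (ψ x))
        + (∫ x in α..β, u x * derivWithin (fun y => conj (ψ y)) (Set.Icc α β) x)
        - (u β * conj (ψ β) - U * conj (ψ α)) = 0) :
    (∫ x in α..β, ((‖u1 x‖) ^ 2 - (‖u0 x‖) ^ 2))
      = 2 * Δt * ((P * conj (u β)).im - (ψ α * conj U).im) := by
  have hle : α ≤ β := hαβ.le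
  set s : Set ℝ := Set.Icc α β with hsdef
  have hus : UniqueDiffOn ℝ s := uniqueDiffOn_Icc hαβ
  have huC : ContDiffOn ℝ 1 u s := by
    rw [hu]; exact (hu0.add hu1).div_const 2
  set ud := derivWithin u s with hud
  set ψd := derivWithin ψ s with hψdd
  have hudiff : ∀ x ∈ s, HasDerivWithinAt u (ud x) s x := fun x hx =>
    (huC.differentiableOn one_ne_zero x hx).hasDerivWithinAt
  have hψdiff : ∀ x ∈ s, HasDerivWithinAt ψ (ψd x) s x := fun x hx =>
    (hψ.differentiableOn one_ne_zero x hx).hasDerivWithinAt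
  have hconj_u : ∀ x ∈ s, derivWithin (fun y => conj (u y)) s x = conj (ud x) := fun x hx =>
    (hudiff x hx).star.derivWithin (hus x hx)
  have hconj_ψ : ∀ x ∈ s, derivWithin (fun y => conj (ψ y)) s x = conj (ψd x) := fun x hx =>
    (hψdiff x hx).star.derivWithin (hus x hx)
  have hucont : ContinuousOn u s := huC.continuousOn
  have hψcont : ContinuousOn ψ s := hψ.continuousOn
  have hudcont : ContinuousOn ud s := huC.continuousOn_derivWithin hus le_rfl
  have hψdcont : ContinuousOn ψd s := hψ.continuousOn_derivWithin hus le_rfl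
  have huI : Set.uIcc α β = s := Set.uIcc_of_le hle
  have hInt : ∀ {f : ℝ → ℂ}, ContinuousOn f s → IntervalIntegrable f volume α β := by
    intro f hf
    exact ContinuousOn.intervalIntegrable (by rw [huI]; exact hf)
  have hIntR : ∀ {f : ℝ → ℝ}, ContinuousOn f s → IntervalIntegrable f volume α β := by
    intro f hf
    exact ContinuousOn.intervalIntegrable (by rw [huI]; exact hf)
  -- conj commutes with interval integrals
  have hconj_int : ∀ (f : ℝ → ℂ), (∫ x in α..β, conj (f x)) = conj (∫ x in α..β, f x) := by
    intro f
    rw [intervalIntegral.integral_of_le hle, intervalIntegral.integral_of_le hle, integral_conj]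
  -- named integrals
  set A := ∫ x in α..β, (u1 x - u0 x) * conj (u x) with hA
  set C := ∫ x in α..β, ψ x * conj (ud x) with hC
  set D := ∫ x in α..β, u x * conj (ψd x) with hD
  set E := ∫ x in α..β, ψd x * conj (u x) with hE
  -- rewrite E1
  have hQint : (∫ x in α..β, ((Q x : ℂ) * (u x * conj (u x))))
      = ((∫ x in α..β, Q x * Complex.normSq (u x)) : ℝ) := by
    rw [← intervalIntegral.integral_ofReal]
    refine intervalIntegral.integral_congr fun x _ => ?_
    rw [Complex.mul_conj]
    push_cast
    ring
  have hWint : (∫ x in α..β, u x * conj (u x) * (W x : ℂ))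
      = ((∫ x in α..β, Complex.normSq (u x) * W x) : ℝ) := by
    rw [← intervalIntegral.integral_ofReal]
    refine intervalIntegral.integral_congr fun x _ => ?_
    rw [Complex.mul_conj]
    push_cast
    ring
  have hSint : (∫ x in α..β, ψ x * conj (ψ x))
      = ((∫ x in α..β, Complex.normSq (ψ x)) : ℝ) := by
    rw [← intervalIntegral.integral_ofReal]
    refine intervalIntegral.integral_congr fun x _ => ?_
    rw [Complex.mul_conj]
  have hIC : IntervalIntegrable (fun x => ψ x * conj (ud x)) volume α β :=
    hInt (hψcont.mul hudcont.star)
  have hIQ : IntervalIntegrable (fun x => (Q x : ℂ) * (u x * conj (u x))) volume α β :=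
    hInt ((Complex.continuous_ofReal.comp_continuousOn hQ).mul (hucont.mul hucont.star))
  have hsplit1 : (∫ x in α..β,
        (ψ x * derivWithin (fun y => conj (u y)) s x - (Q x : ℂ) * (u x * conj (u x))))
      = C - ((∫ x in α..β, Q x * Complex.normSq (u x)) : ℝ) := by
    rw [← hQint, hC, ← intervalIntegral.integral_sub hIC hIQ]
    refine intervalIntegral.integral_congr fun x hx => ?_
    rw [hconj_u x (huI ▸ hx)]
  have hE1' : Complex.I * A - (Δt : ℂ) * (P * conj (u β) - ψ α * conj (u α))
      + (Δt : ℂ) * (C - ((∫ x in α..β, Q x * Complex.normSq (u x)) : ℝ))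
      - ((∫ x in α..β, Complex.normSq (u x) * W x) : ℝ) = 0 := by
    rw [← hsplit1, ← hWint]; exact hE1
  -- rewrite E2
  have hE2' : ((∫ x in α..β, Complex.normSq (ψ x)) : ℝ) + D
      - (u β * conj (ψ β) - U * conj (ψ α)) = 0 := by
    rw [← hSint, hD]
    have : (∫ x in α..β, u x * derivWithin (fun y => conj (ψ y)) s x)
        = ∫ x in α..β, u x * conj (ψd x) :=
      intervalIntegral.integral_congr fun x hx => by rw [hconj_ψ x (huI ▸ hx)]
    rw [← this]; exact hE2
  -- E = conj D
  have hED : E = conj D := by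
    have h1 : E = ∫ x in α..β, conj (u x * conj (ψd x)) := by
      refine intervalIntegral.integral_congr fun x _ => ?_
      rw [map_mul, Complex.conj_conj]; ring
    rw [h1, hconj_int]
  -- integration by parts
  have hIBP : E + C = ψ β * conj (u β) - ψ α * conj (u α) := by
    have hIE : IntervalIntegrable (fun x => ψd x * conj (u x)) volume α β :=
      hInt (hψdcont.mul hucont.star)
    have key := intervalIntegral.integral_eq_sub_of_hasDeriv_right_of_le hle
      (f := fun x => ψ x * conj (u x))
      (f' := fun x => ψd x * conj (u x) + ψ x * conj (ud x))
      (hψcont.mul hucont.star)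
      (fun x hx => by
        have hxs : x ∈ s := Set.Ioo_subset_Icc_self hx
        have hmem : s ∈ nhds x := Icc_mem_nhds hx.1 hx.2
        have h1 : HasDerivAt ψ (ψd x) x := (hψdiff x hxs).hasDerivAt hmem
        have h2 : HasDerivAt u (ud x) x := (hudiff x hxs).hasDerivAt hmem
        exact (h1.mul h2.star).hasDerivWithinAt)
      (hIE.add hIC)
    rw [intervalIntegral.integral_add hIE hIC] at key
    exact key
  -- imaginary parts
  have hIm1 := congrArg Complex.im hE1'
  have hIm2 := congrArg Complex.im hE2'
  have hImIBP := congrArg Complex.im hIBP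
  simp only [Complex.add_im, Complex.sub_im, Complex.mul_im, Complex.I_re, Complex.I_im,
    Complex.ofReal_re, Complex.ofReal_im, Complex.zero_im, zero_mul, one_mul, mul_zero,
    zero_add, add_zero, sub_zero, zero_sub, Complex.mul_re, Complex.conj_re,
    Complex.conj_im] at hIm1 hIm2 hImIBP
  have hEimD : E.im = -D.im := by rw [hED, Complex.conj_im]
  -- relate boundary terms
  have hb1 : (u β * conj (ψ β)).im = -(ψ β * conj (u β)).im := by
    simp only [Complex.mul_im, Complex.conj_re, Complex.conj_im]; ring
  have hb2 : (U * conj (ψ α)).im = -(ψ α * conj U).im := by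
    simp only [Complex.mul_im, Complex.conj_re, Complex.conj_im]; ring
  -- LHS equals 2 * A.re
  have hpt : ∀ x, (‖u1 x‖) ^ 2 - (‖u0 x‖) ^ 2
      = 2 * ((u1 x - u0 x) * conj (u x)).re := by
    intro x
    rw [hu]
    simp only [← Complex.normSq_eq_norm_sq, Complex.normSq_apply, Complex.mul_re,
      Complex.sub_re, Complex.sub_im, Complex.conj_re, Complex.conj_im,
      Complex.div_re, Complex.div_im, Complex.add_re, Complex.add_im,
      Complex.normSq_ofNat, Complex.re_ofNat, Complex.im_ofNat]
    push_cast
    ring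
  have hIA : IntervalIntegrable (fun x => (u1 x - u0 x) * conj (u x)) volume α β :=
    hInt (((hu1.continuousOn).sub (hu0.continuousOn)).mul hucont.star)
  have hLHS : (∫ x in α..β, ((‖u1 x‖) ^ 2 - (‖u0 x‖) ^ 2))
      = 2 * A.re := by
    have hre : A.re = ∫ x in α..β, ((u1 x - u0 x) * conj (u x)).re := by
      rw [hA, intervalIntegral.integral_of_le hle, intervalIntegral.integral_of_le hle]
      exact (integral_re hIA.1).symm
    rw [hre, ← intervalIntegral.integral_const_mul]
    exact intervalIntegral.integral_congr fun x _ => hpt x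
  rw [hLHS]
  simp only [Complex.mul_im, Complex.conj_re, Complex.conj_im] at hb1 hb2 ⊢
  linear_combination (2:ℝ) * hIm1 - 2*Δt*hImIBP + 2*Δt*hEimD - 2*Δt*hIm2
    - 2*Δt*hb1 + 2*Δt*hb2
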